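/- If N' is a vertex cover of G̃ with |N'| ≤ C, then the set S consisting of the node-vertices corresponding to N' together with all edge-vertices is a feasible set in the reduction instance, and its cost equals |N'|, hence is at most C. -/

import Mathlib

open Finset

/-- The graph `Ĝ` of the reduction: vertices are node-vertices (`Sum.inl`) and
edge-vertices (`Sum.inr`); node-vertices form a clique, a node-vertex is adjacent to an
edge-vertex iff it is an endpoint of that edge, and edge-vertices are pairwise
nonadjacent. -/
def hatG {N : Type*} (G : SimpleGraph N) : SimpleGraph (N ⊕ G.edgeSet) where
  Adj x y :=
    match x, y with
    | Sum.inl i, Sum.inl j => i ≠ j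
    | Sum.inl i, Sum.inr e => i ∈ (e : Sym2 N)
    | Sum.inr e, Sum.inl i => i ∈ (e : Sym2 N)
    | Sum.inr _, Sum.inr _ => False
  symm := by
    constructor
    rintro (i | e) (j | e') h <;> simp_all
    all_goals exact fun h' => h h'.symm
  loopless := by
    constructor
    rintro (i | e) h <;> simp_all

/-- A set of vertices of `Ĝ` is feasible if it induces a connected subgraph and
satisfies the demand constraint: it contains at least `|Ẽ|` edge-vertices. -/
def RFeasible {N : Type*} [Fintype N] [DecidableEq N] (G : SimpleGraph N)
    [DecidableRel G.Adj] (S : Finset (N ⊕ G.edgeSet)) : Prop :=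
  ((hatG G).induce (S : Set (N ⊕ G.edgeSet))).Connected ∧
    G.edgeFinset.card ≤ (S.filter (fun x => x.isRight = true)).card

/-- The cost of a set of vertices of `Ĝ` is its number of node-vertices. -/
def rcost {N : Type*} [Fintype N] [DecidableEq N] (G : SimpleGraph N)
    [DecidableRel G.Adj] (S : Finset (N ⊕ G.edgeSet)) : ℕ :=
  (S.filter (fun x => x.isLeft = true)).card

/-- `N'` is a vertex cover of `G`: every edge of `G` has an endpoint in `N'`. -/
def IsVertexCover {N : Type*} (G : SimpleGraph N) (N' : Finset N) : Prop :=
  ∀ e ∈ G.edgeSet, ∃ i ∈ N', i ∈ e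

/-- If `N'` is a vertex cover of `G̃` with `|N'| ≤ C`, then the node-vertices of
`N'` together with all edge-vertices form a feasible set of the reduction instance
whose cost equals `|N'|`, hence is at most `C`. -/
theorem feasible_of_vertexCover {N : Type*} [Fintype N] [DecidableEq N]
    (G : SimpleGraph N) [DecidableRel G.Adj]
    (hE : G.edgeFinset.Nonempty)
    (N' : Finset N) (hvc : IsVertexCover G N') (C : ℕ) (hC : N'.card ≤ C) :
    RFeasible G (N'.image Sum.inl ∪ (univ : Finset G.edgeSet).image Sum.inr) ∧
      rcost G (N'.image Sum.inl ∪ (univ : Finset G.edgeSet).image Sum.inr) = N'.card ∧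
      rcost G (N'.image Sum.inl ∪ (univ : Finset G.edgeSet).image Sum.inr) ≤ C := by
  set S : Finset (N ⊕ G.edgeSet) :=
    N'.image Sum.inl ∪ (univ : Finset G.edgeSet).image Sum.inr with hS
  -- pick an edge and a covering vertex
  obtain ⟨e0, he0⟩ := hE
  rw [SimpleGraph.mem_edgeFinset] at he0
  obtain ⟨i0, hi0N, hi0e⟩ := hvc e0 he0
  have hi0S : (Sum.inl i0 : N ⊕ G.edgeSet) ∈ S := by
    simp [hS, hi0N]
  -- membership facts
  have hinl : ∀ j ∈ N', (Sum.inl j : N ⊕ G.edgeSet) ∈ S := by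
    intro j hj; simp [hS, hj]
  have hinr : ∀ e : G.edgeSet, (Sum.inr e : N ⊕ G.edgeSet) ∈ S := by
    intro e; simp [hS]
  constructor
  · constructor
    · -- preconnected
      rw [SimpleGraph.connected_iff]
      refine ⟨?_, ⟨⟨Sum.inl i0, by exact_mod_cast hi0S⟩⟩⟩
      -- every vertex reachable from inl i0
      have key : ∀ x : ((S : Set (N ⊕ G.edgeSet)) : Type _),
          ((hatG G).induce (S : Set (N ⊕ G.edgeSet))).Reachable
            ⟨Sum.inl i0, by exact_mod_cast hi0S⟩ x := by
        rintro ⟨(j | e), hx⟩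
        · by_cases h : i0 = j
          · subst h; exact SimpleGraph.Reachable.refl _
          · exact SimpleGraph.Adj.reachable (by simpa [hatG, SimpleGraph.induce] using h)
        · have heE : (e : Sym2 N) ∈ G.edgeSet := e.2
          obtain ⟨i, hiN, hie⟩ := hvc e heE
          have hiS : (Sum.inl i : N ⊕ G.edgeSet) ∈ S := hinl i hiN
          have r2 : ((hatG G).induce (S : Set (N ⊕ G.edgeSet))).Reachable
              ⟨Sum.inl i, by exact_mod_cast hiS⟩ ⟨Sum.inr e, hx⟩ :=
            SimpleGraph.Adj.reachable (by simpa [hatG, SimpleGraph.induce] using hie)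
          by_cases h : i0 = i
          · subst h; exact r2
          · exact (SimpleGraph.Adj.reachable
              (show ((hatG G).induce _).Adj ⟨Sum.inl i0, by exact_mod_cast hi0S⟩
                ⟨Sum.inl i, by exact_mod_cast hiS⟩ from by
                  simpa [hatG, SimpleGraph.induce] using h)).trans r2
      intro x y
      exact (key x).symm.trans (key y)
    · -- demand
      have : S.filter (fun x => x.isRight = true)
          = (univ : Finset G.edgeSet).image Sum.inr := by
        ext x
        rcases x with j | e <;> simp [hS]
      rw [this, Finset.card_image_of_injective _ Sum.inr_injective,
        Finset.card_univ, SimpleGraph.edgeFinset, Set.toFinset_card]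
  · have hcost : rcost G S = N'.card := by
      have : S.filter (fun x => x.isLeft = true) = N'.image Sum.inl := by
        ext x
        rcases x with j | e <;> simp [hS]
      rw [rcost, this, Finset.card_image_of_injective _ Sum.inl_injective]
    exact ⟨hcost, hcost ▸ hC⟩
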